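/- Let n ≥ 1 and set n' = n − d⁻(v_n) − d⁻(v_{n − d⁻(v_n)}) − 1, where d⁻ denotes in-degree in the infinite Jaco graph J_∞(1). If n' ≥ 1, then the domination numbers of the underlying graphs of the finite Jaco graphs satisfy γ(J_n(1)) = γ(J_{n'}(1)) + 1. -/

import Mathlib

open SimpleGraph

/-- In-degree of vertex `j` in the infinite Jaco graph `J_∞(1)`:
the number of `i < j` with an arc `(v_i, v_j)`, i.e. `i < j` and `j ≤ 2i - d⁻(v_i)`. -/
noncomputable def jacoInDeg (j : ℕ) : ℕ :=
  Nat.strongRecOn j fun j ih =>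
    ((Finset.range j).attach.filter
      (fun i => j ≤ 2 * i.1 - ih i.1 (Finset.mem_range.mp i.2))).card

/-- Out-degree of vertex `i` in `J_∞(1)`: the number of `j` with `i < j ≤ 2i - d⁻(v_i)`. -/
noncomputable def jacoOutDeg (i : ℕ) : ℕ := (Finset.Ioc i (2 * i - jacoInDeg i)).card

/-- The underlying (undirected, simple) graph of the infinite Jaco graph `J_∞(1)` on `ℕ`,
with vertex `i` playing the role of `v_i`. -/
def JacoInf : SimpleGraph ℕ where
  Adj i j := (i < j ∧ j ≤ 2 * i - jacoInDeg i) ∨ (j < i ∧ i ≤ 2 * j - jacoInDeg j)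
  symm := ⟨fun i j h => Or.symm h⟩
  loopless := ⟨fun i h => by rcases h with ⟨h, -⟩ | ⟨h, -⟩ <;> omega⟩

/-- The underlying graph of the finite Jaco graph `J_n(1)`: the subgraph of `J_∞(1)`
induced by `{v_1, …, v_n}`, with `(k : Fin n)` representing `v_{k+1}`. -/
def Jaco (n : ℕ) : SimpleGraph (Fin n) := JacoInf.comap (fun k => (k : ℕ) + 1)

/-- `s` is an independent set of `G`. -/
def IsIndepSet {V : Type*} (G : SimpleGraph V) (s : Set V) : Prop :=
  s.Pairwise fun a b => ¬ G.Adj a b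

/-- The independence number of `G`. -/
noncomputable def indepNum {V : Type*} [Fintype V] (G : SimpleGraph V) : ℕ :=
  sSup {k | ∃ s : Set V, _root_.IsIndepSet G s ∧ s.ncard = k}

/-- `s` is a vertex cover of `G`: it meets every edge. -/
def IsVertexCover {V : Type*} (G : SimpleGraph V) (s : Set V) : Prop :=
  ∀ ⦃a b : V⦄, G.Adj a b → a ∈ s ∨ b ∈ s

/-- The vertex covering number of `G`. -/
noncomputable def coverNum {V : Type*} [Fintype V] (G : SimpleGraph V) : ℕ :=
  sInf {k | ∃ s : Set V, _root_.IsVertexCover G s ∧ s.ncard = k}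

/-- `s` is a dominating set of `G`. -/
def IsDomSet {V : Type*} (G : SimpleGraph V) (s : Set V) : Prop :=
  ∀ v ∉ s, ∃ u ∈ s, G.Adj u v

/-- The domination number `γ(G)`. -/
noncomputable def domNum {V : Type*} [Fintype V] (G : SimpleGraph V) : ℕ :=
  sInf {k | ∃ s : Set V, IsDomSet G s ∧ s.ncard = k}

/-- The murtage number `m(G)`: the minimum number of edges whose addition to `G`
strictly decreases the domination number (and `0` when `γ(G) = 1`). -/
noncomputable def murtage {V : Type*} [Fintype V] (G : SimpleGraph V) : ℕ :=
  if domNum G = 1 then 0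
  else sInf {k | ∃ H : SimpleGraph V, G ≤ H ∧ domNum H < domNum G ∧
        (H.edgeSet \ G.edgeSet).ncard = k}

/-- `γ⁻(G)`: the minimum number of vertices whose removal strictly decreases
the domination number. -/
noncomputable def gammaMinus {V : Type*} [Fintype V] (G : SimpleGraph V) : ℕ :=
  sInf {k | ∃ s : Set V, s.ncard = k ∧
        @domNum _ (Set.toFinite sᶜ).fintype (G.induce sᶜ) < domNum G}

/-- The bondage number `b(G)`: the minimum number of edges whose removal strictly
increases the domination number. -/
noncomputable def bondage {V : Type*} [Fintype V] (G : SimpleGraph V) : ℕ :=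
  sInf {k | ∃ H : SimpleGraph V, H ≤ G ∧ domNum G < domNum H ∧
        (G.edgeSet \ H.edgeSet).ncard = k}

/-- The maximum degree `Δ(G)`. -/
noncomputable def maxDeg {V : Type*} [Fintype V] (G : SimpleGraph V) : ℕ :=
  Finset.univ.sup fun v => (G.neighborSet v).ncard

theorem indeg_eq (j : ℕ) : jacoInDeg j =
    ((Finset.range j).filter (fun i => j ≤ 2 * i - jacoInDeg i)).card := by
  rw [jacoInDeg, Nat.strongRecOn, WellFounded.fix_eq]
  show ((Finset.range j).attach.filter (fun i => j ≤ 2 * i.1 - jacoInDeg i.1)).card = _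
  apply Finset.card_bij (fun a _ => a.1)
  · intro a ha
    simp only [Finset.mem_filter] at ha ⊢
    exact ⟨a.2, ha.2⟩
  · intro a ha b hb h
    exact Subtype.ext h
  · intro b hb
    simp only [Finset.mem_filter] at hb
    exact ⟨⟨b, hb.1⟩, by simp [hb.2], rfl⟩

theorem indeg_le (j : ℕ) : jacoInDeg j ≤ j := by
  rw [indeg_eq]
  calc _ ≤ (Finset.range j).card := Finset.card_filter_le _ _
    _ = j := Finset.card_range j

theorem indeg_zero : jacoInDeg 0 = 0 := by
  rw [indeg_eq]; simp

theorem indeg_lt (j : ℕ) (hj : 1 ≤ j) : jacoInDeg j < j := by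
  rw [indeg_eq]
  have : (Finset.range j).filter (fun i => j ≤ 2 * i - jacoInDeg i) ⊆
      (Finset.Ico 1 j) := by
    intro i hi
    simp only [Finset.mem_filter, Finset.mem_range] at hi
    simp only [Finset.mem_Ico]
    rcases Nat.eq_zero_or_pos i with h0 | h1
    · exfalso; subst h0; simp [indeg_zero] at hi; omega
    · exact ⟨h1, hi.1⟩
  calc _ ≤ (Finset.Ico 1 j).card := Finset.card_le_card this
    _ = j - 1 := by rw [Nat.card_Ico]
    _ < j := by omega

theorem indeg_succ_le (j : ℕ) : jacoInDeg (j+1) ≤ jacoInDeg j + 1 := by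
  rw [indeg_eq (j+1), indeg_eq j]
  have : (Finset.range (j+1)).filter (fun i => j+1 ≤ 2 * i - jacoInDeg i) ⊆
      insert j ((Finset.range j).filter (fun i => j ≤ 2 * i - jacoInDeg i)) := by
    intro i hi
    simp only [Finset.mem_filter, Finset.mem_range, Finset.mem_insert] at hi ⊢
    rcases Nat.lt_or_ge i j with h | h
    · exact Or.inr ⟨h, by omega⟩
    · exact Or.inl (by omega)
  calc _ ≤ _ := Finset.card_le_card this
    _ ≤ _ := Finset.card_insert_le _ _

/-- `f i = 2i - d⁻(i)` is strictly increasing (step version). -/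
theorem f_step (i : ℕ) : 2 * i - jacoInDeg i + 1 ≤ 2 * (i+1) - jacoInDeg (i+1) := by
  have h1 := indeg_succ_le i
  have h2 := indeg_le i
  have h3 := indeg_le (i+1)
  omega

theorem f_mono {i j : ℕ} (h : i ≤ j) : 2 * i - jacoInDeg i ≤ 2 * j - jacoInDeg j := by
  induction j with
  | zero => omega
  | succ k ih =>
    rcases Nat.lt_or_ge i (k+1) with h' | h'
    · have := ih (by omega); have := f_step k; omega
    · have : i = k + 1 := by omega
      subst this; omega

theorem g_mono {i j : ℕ} (h : i ≤ j) : i - jacoInDeg i ≤ j - jacoInDeg j := by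
  induction j with
  | zero => omega
  | succ k ih =>
    rcases Nat.lt_or_ge i (k+1) with h' | h'
    · have := ih (by omega)
      have := indeg_succ_le k
      have := indeg_le k
      omega
    · have : i = k + 1 := by omega
      subst this; omega

/-- In-neighbors of `j` form the interval `[j - d⁻(j), j)`. -/
theorem filter_eq_Ico (j : ℕ) :
    (Finset.range j).filter (fun i => j ≤ 2 * i - jacoInDeg i) =
      Finset.Ico (j - jacoInDeg j) j := by
  set S := (Finset.range j).filter (fun i => j ≤ 2 * i - jacoInDeg i) with hS
  have hcard : S.card = jacoInDeg j := (indeg_eq j).symm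
  rcases S.eq_empty_or_nonempty with he | hne
  · rw [he]
    have : jacoInDeg j = 0 := by rw [← hcard, he]; simp
    rw [this]; simp
  · have hmin := S.min'_mem hne
    set a := S.min' hne with ha
    have hSI : S = Finset.Ico a j := by
      apply Finset.Subset.antisymm
      · intro i hi
        simp only [Finset.mem_Ico]
        exact ⟨S.min'_le i hi, Finset.mem_range.mp (Finset.mem_filter.mp hi).1⟩
      · intro i hi
        simp only [Finset.mem_Ico] at hi
        simp only [hS, Finset.mem_filter, Finset.mem_range]
        refine ⟨hi.2, ?_⟩
        have haS := Finset.mem_filter.mp hmin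
        calc j ≤ 2 * a - jacoInDeg a := haS.2
          _ ≤ 2 * i - jacoInDeg i := f_mono hi.1
    have hcard' : j - a = jacoInDeg j := by
      rw [← hcard, hSI, Nat.card_Ico]
    have haj : a < j := Finset.mem_range.mp (Finset.mem_filter.mp hmin).1
    have : a = j - jacoInDeg j := by omega
    rw [hSI, this]

theorem inNbr_iff {i j : ℕ} (h : i < j) :
    j ≤ 2 * i - jacoInDeg i ↔ j - jacoInDeg j ≤ i := by
  have := filter_eq_Ico j
  constructor
  · intro hf
    have : i ∈ Finset.Ico (j - jacoInDeg j) j := by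
      rw [← this]; simp only [Finset.mem_filter, Finset.mem_range]; exact ⟨h, hf⟩
    exact (Finset.mem_Ico.mp this).1
  · intro hle
    have : i ∈ (Finset.range j).filter (fun i => j ≤ 2 * i - jacoInDeg i) := by
      rw [this]; exact Finset.mem_Ico.mpr ⟨hle, h⟩
    exact (Finset.mem_filter.mp this).2

theorem indeg_pos {j : ℕ} (hj : 2 ≤ j) : 1 ≤ jacoInDeg j := by
  have h1 : j - 1 < j := by omega
  have h2 : jacoInDeg (j-1) < j - 1 := indeg_lt _ (by omega)
  have h3 : j ≤ 2 * (j-1) - jacoInDeg (j-1) := by omega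
  have := (inNbr_iff h1).mp h3
  have := indeg_le j
  omega

theorem jaco_adj {n : ℕ} (x y : Fin n) :
    (Jaco n).Adj x y ↔ JacoInf.Adj ((x : ℕ) + 1) ((y : ℕ) + 1) := Iff.rfl

theorem isDomSet_univ {V : Type*} [Fintype V] (G : SimpleGraph V) :
    IsDomSet G Set.univ := fun v hv => absurd (Set.mem_univ v) hv

theorem domNum_le {V : Type*} [Fintype V] (G : SimpleGraph V) {s : Set V}
    (h : IsDomSet G s) : domNum G ≤ s.ncard := Nat.sInf_le ⟨s, h, rfl⟩

theorem exists_domSet {V : Type*} [Fintype V] (G : SimpleGraph V) :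
    ∃ s : Set V, IsDomSet G s ∧ s.ncard = domNum G := by
  have hne : {k | ∃ s : Set V, IsDomSet G s ∧ s.ncard = k}.Nonempty :=
    ⟨(Set.univ : Set V).ncard, Set.univ, isDomSet_univ G, rfl⟩
  exact Nat.sInf_mem hne


/-- With `n' = n - d⁻(v_n) - d⁻(v_{n - d⁻(v_n)}) - 1`, if `n' ≥ 1` then
`γ(J_n(1)) = γ(J_{n'}(1)) + 1`. -/
theorem jaco_domNum_recursion (n : ℕ) (hn : 1 ≤ n)
    (hn' : 1 ≤ n - jacoInDeg n - jacoInDeg (n - jacoInDeg n) - 1) :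
    domNum (Jaco n) =
      domNum (Jaco (n - jacoInDeg n - jacoInDeg (n - jacoInDeg n) - 1)) + 1 := by
  set m := n - jacoInDeg n with hm
  set n' := m - jacoInDeg m - 1 with hn'def
  have hdln : jacoInDeg n ≤ n := indeg_le n
  have hdlm : jacoInDeg m ≤ m := indeg_le m
  have hn2 : 2 ≤ n := by omega
  have hdn : 1 ≤ jacoInDeg n := indeg_pos hn2
  have hmn : m < n := by omega
  have hm2 : 2 ≤ m := by omega
  have hdm : 1 ≤ jacoInDeg m := indeg_pos hm2
  have hn'm : n' + 1 = m - jacoInDeg m := by omega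
  have hn'n : n' < n := by omega
  have hfm : n ≤ 2 * m - jacoInDeg m := (inNbr_iff hmn).mpr (by omega)
  have hdn' : jacoInDeg n' ≤ n' := indeg_le n'
  -- the embedding from Fin n' to Fin n
  set e : Fin n' → Fin n := fun x => (⟨x.val, lt_trans x.2 hn'n⟩ : Fin n) with he
  have heinj : Function.Injective e := by
    intro x y h
    have h2 := congrArg Fin.val h
    exact Fin.ext h2
  apply le_antisymm
  · -- upper bound
    obtain ⟨D', hD', hcard'⟩ := exists_domSet (Jaco n')
    have hmlt : m - 1 < n := by omega
    set w : Fin n := ⟨m - 1, hmlt⟩ with hw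
    have hwval : (w : ℕ) + 1 = m := by simp [hw]; omega
    set D : Set (Fin n) := insert w (e '' D') with hD
    have hdom : IsDomSet (Jaco n) D := by
      intro v hv
      by_cases hlow : (v : ℕ) + 1 ≤ n'
      · set x : Fin n' := ⟨v.val, by omega⟩ with hx
        by_cases hxD : x ∈ D'
        · refine absurd ?_ hv
          exact Set.mem_insert_iff.mpr (Or.inr ⟨x, hxD, rfl⟩)
        · obtain ⟨u, hu, hadj⟩ := hD' x hxD
          exact ⟨e u, Set.mem_insert_iff.mpr (Or.inr ⟨u, hu, rfl⟩), hadj⟩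
      · -- v is dominated by w (vertex m)
        refine ⟨w, Set.mem_insert _ _, ?_⟩
        rw [jaco_adj, hwval]
        have hvn : (v : ℕ) + 1 ≤ n := by omega
        have hvm : (v : ℕ) + 1 ≠ m := by
          intro hcontra
          apply hv
          have : v = w := Fin.ext (by omega)
          rw [this]; exact Set.mem_insert _ _
        rcases Nat.lt_or_ge ((v : ℕ) + 1) m with hlt | hge
        · exact Or.inr ⟨hlt, (inNbr_iff hlt).mpr (by omega)⟩
        · have hlt : m < (v : ℕ) + 1 := by omega
          exact Or.inl ⟨hlt, by omega⟩
    have hwnot : w ∉ e '' D' := by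
      rintro ⟨x, -, hex⟩
      have : (x : ℕ) = m - 1 := congrArg Fin.val hex
      have := x.2
      omega
    have hcardD : D.ncard = domNum (Jaco n') + 1 := by
      rw [hD, Set.ncard_insert_of_notMem hwnot,
        Set.ncard_image_of_injective _ heinj, hcard']
    calc domNum (Jaco n) ≤ D.ncard := domNum_le _ hdom
      _ = _ := hcardD
  · -- lower bound
    obtain ⟨D, hD, hcard⟩ := exists_domSet (Jaco n)
    set P : Set (Fin n) := {v | (v : ℕ) + 1 ≤ n'} with hP
    have hAB : (D ∩ P).ncard + (D \ P).ncard = D.ncard :=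
      Set.ncard_inter_add_ncard_diff_eq_ncard D P
    -- find a dominator of vertex n with label ≥ m
    have hwB : ∃ w ∈ D, m ≤ (w : ℕ) + 1 := by
      have hlast : n - 1 < n := by omega
      set vn : Fin n := ⟨n - 1, hlast⟩ with hvn
      have hvnval : (vn : ℕ) + 1 = n := by simp [hvn]; omega
      by_cases hvnD : vn ∈ D
      · exact ⟨vn, hvnD, by omega⟩
      · obtain ⟨u, hu, hadj⟩ := hD vn hvnD
        refine ⟨u, hu, ?_⟩
        rw [jaco_adj, hvnval] at hadj
        rcases hadj with ⟨h1, h2⟩ | ⟨h1, h2⟩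
        · have := (inNbr_iff h1).mp h2
          omega
        · have := u.2
          omega
    obtain ⟨w, hwD, hwm⟩ := hwB
    have hwP : w ∉ P := by simp only [hP, Set.mem_setOf_eq]; omega
    -- the transfer of adjacency for low dominators
    have hlowadj : ∀ (x : Fin n') (u : Fin n), u ∈ D → (u : ℕ) + 1 ≤ n' →
        (Jaco n).Adj u (e x) → ∃ u' ∈ (e ⁻¹' D), (Jaco n').Adj u' x := by
      intro x u huD hulow hadj
      set u' : Fin n' := ⟨u.val, by omega⟩ with hu'
      have heu : e u' = u := Fin.ext rfl
      refine ⟨u', by simp only [Set.mem_preimage, heu]; exact huD, ?_⟩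
      exact hadj
    by_cases hB2 : ∀ v ∈ D \ P, v = w
    · -- B = {w}
      have hBeq : D \ P = {w} := by
        apply Set.Subset.antisymm
        · intro v hv; exact hB2 v hv
        · intro v hv
          rw [Set.mem_singleton_iff] at hv
          subst hv
          exact ⟨hwD, hwP⟩
      have hBcard : (D \ P).ncard = 1 := by rw [hBeq]; exact Set.ncard_singleton w
      set s : Set (Fin n') := e ⁻¹' D with hs
      have himg : e '' s = D ∩ P := by
        ext v
        constructor
        · rintro ⟨x, hx, rfl⟩
          refine ⟨hx, ?_⟩
          simp only [hP, Set.mem_setOf_eq, he]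
          have := x.2
          omega
        · rintro ⟨hvD, hvP⟩
          simp only [hP, Set.mem_setOf_eq] at hvP
          refine ⟨⟨v.val, by omega⟩, ?_, Fin.ext rfl⟩
          simpa only [hs, Set.mem_preimage] using (show e ⟨v.val, by omega⟩ ∈ D from by
            have : e ⟨v.val, by omega⟩ = v := Fin.ext rfl
            rw [this]; exact hvD)
      have hscard : s.ncard = (D ∩ P).ncard := by
        rw [← himg, Set.ncard_image_of_injective _ heinj]
      have hdom : IsDomSet (Jaco n') s := by
        intro x hx
        have hex : e x ∉ D := fun h => hx (Set.mem_preimage.mpr h)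
        obtain ⟨u, huD, hadj⟩ := hD (e x) hex
        by_cases hulow : (u : ℕ) + 1 ≤ n'
        · exact hlowadj x u huD hulow hadj
        · exfalso
          have huB : u ∈ D \ P := ⟨huD, by simp only [hP, Set.mem_setOf_eq]; omega⟩
          have huw : u = w := hB2 u huB
          have hum : m ≤ (u : ℕ) + 1 := by rw [huw]; exact hwm
          have hexval : ((e x : Fin n) : ℕ) + 1 = (x : ℕ) + 1 := rfl
          rw [jaco_adj, hexval] at hadj
          have hxn' : (x : ℕ) + 1 ≤ n' := by have := x.2; omega
          rcases hadj with ⟨h1, h2⟩ | ⟨h1, h2⟩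
          · omega
          · have h3 := (inNbr_iff h1).mp h2
            have h4 := g_mono (show m ≤ (u : ℕ) + 1 from hum)
            omega
      have : domNum (Jaco n') ≤ s.ncard := domNum_le _ hdom
      omega
    · -- |B| ≥ 2
      push_neg at hB2
      obtain ⟨w', hw'B, hww'⟩ := hB2
      have hB2card : 2 ≤ (D \ P).ncard := by
        rw [show (2 : ℕ) = 1 + 1 from rfl]
        apply Set.one_lt_ncard_iff (Set.toFinite _) |>.mpr
        exact ⟨w', w, hw'B, ⟨hwD, hwP⟩, hww'⟩
      set xl : Fin n' := ⟨n' - 1, by omega⟩ with hxl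
      have hxlval : (xl : ℕ) + 1 = n' := by simp [hxl]; omega
      set s : Set (Fin n') := insert xl (e ⁻¹' D) with hs
      have hscard : s.ncard ≤ (D ∩ P).ncard + 1 := by
        have h1 : s.ncard ≤ (e ⁻¹' D).ncard + 1 := by
          rw [hs]
          exact Set.ncard_insert_le _ _
        have himg : e '' (e ⁻¹' D) = D ∩ P := by
          ext v
          constructor
          · rintro ⟨x, hx, rfl⟩
            refine ⟨hx, ?_⟩
            simp only [hP, Set.mem_setOf_eq, he]
            have := x.2
            omega
          · rintro ⟨hvD, hvP⟩
            simp only [hP, Set.mem_setOf_eq] at hvP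
            refine ⟨⟨v.val, by omega⟩, ?_, Fin.ext rfl⟩
            have : e ⟨v.val, by omega⟩ = v := Fin.ext rfl
            simp only [Set.mem_preimage, this]
            exact hvD
        have h2 : (e ⁻¹' D).ncard = (D ∩ P).ncard := by
          rw [← himg, Set.ncard_image_of_injective _ heinj]
        omega
      have hdom : IsDomSet (Jaco n') s := by
        intro x hx
        have hex : e x ∉ D := fun h => hx (Set.mem_insert_iff.mpr (Or.inr (Set.mem_preimage.mpr h)))
        have hxnl : x ≠ xl := fun h => hx (h ▸ Set.mem_insert _ _)
        have hxval : (x : ℕ) + 1 < n' := by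
          have h1 := x.2
          have : (x : ℕ) ≠ n' - 1 := fun h => hxnl (Fin.ext (by omega))
          omega
        obtain ⟨u, huD, hadj⟩ := hD (e x) hex
        by_cases hulow : (u : ℕ) + 1 ≤ n'
        · obtain ⟨u', hu', hadj'⟩ := hlowadj x u huD hulow hadj
          exact ⟨u', Set.mem_insert_iff.mpr (Or.inr hu'), hadj'⟩
        · refine ⟨xl, Set.mem_insert _ _, ?_⟩
          have hexval : ((e x : Fin n) : ℕ) + 1 = (x : ℕ) + 1 := rfl
          rw [jaco_adj, hexval] at hadj
          have hagelow : n' - jacoInDeg n' ≤ (x : ℕ) + 1 := by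
            rcases hadj with ⟨h1, h2⟩ | ⟨h1, h2⟩
            · omega
            · have h3 := (inNbr_iff h1).mp h2
              have h4 := g_mono (show n' ≤ (u : ℕ) + 1 by omega)
              omega
          rw [jaco_adj, hxlval]
          exact Or.inr ⟨by omega, (inNbr_iff (by omega : (x:ℕ)+1 < n')).mpr hagelow⟩
      have h5 : domNum (Jaco n') ≤ s.ncard := domNum_le _ hdom
      omega
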